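/- arXiv:1805.06856 — 3 statements merged into one kernel-verified Lean document; each statement's English description precedes it below -/
import Mathlib

section
/- Let (P₀, Q₀) and (P, Q) be pairs of orthogonal projections on H, both in generic position, with P₀ - Q₀ = P - Q = A. Let V₀ and V be the Davis symmetries of (P₀, Q₀) and (P, Q) respectively (the symmetry commuting with the sum minus 1 that makes the product positive). If ‖V - V₀‖ < 2, then there exists a unique Z ∈ B(H) with Z* = -Z, ‖Z‖ < π/2, ZA = AZ, ZV₀ = -V₀Z, such that exp(Z) P₀ exp(-Z) = P and exp(Z) Q₀ exp(-Z) = Q. -/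
open ContinuousLinearMap

section helpers
variable {𝕜 : Type*} {A : Type*} [RCLike 𝕜] {p : A → Prop} [NormedRing A] [StarRing A]
  [IsTopologicalRing A] [ContinuousStar A] [NormedAlgebra 𝕜 A]
  [ContinuousFunctionalCalculus 𝕜 A p]

omit [ContinuousStar A] in
lemma commute_cfc' {a b : A} (ha : p a) (h : Commute b a) (h' : Commute b (star a))
    (f : 𝕜 → 𝕜) : Commute b (cfc f a) := by
  have hcs : CompactSpace (spectrum 𝕜 a) :=
    ContinuousFunctionalCalculus.compactSpace_spectrum (R := 𝕜) (p := p) a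
  by_cases hf : ContinuousOn f (spectrum 𝕜 a)
  · rw [cfc_apply f a ha hf]
    suffices hall : ∀ g : C(spectrum 𝕜 a, 𝕜), Commute b (cfcHom ha g) from hall _
    intro g
    induction g using ContinuousMap.induction_on_of_compact with
    | const r =>
        have : (ContinuousMap.const (spectrum 𝕜 a) r) = algebraMap 𝕜 C(spectrum 𝕜 a, 𝕜) r := rfl
        rw [this, AlgHomClass.commutes]
        exact Algebra.commute_algebraMap_right r b
    | id => rw [cfcHom_id ha]; exact h
    | star_id => rw [map_star, cfcHom_id ha]; exact h'
    | add f₁ f₂ h₁ h₂ => rw [map_add]; exact h₁.add_right h₂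
    | mul f₁ f₂ h₁ h₂ => rw [map_mul]; exact h₁.mul_right h₂
    | frequently f₁ hfreq =>
        have hcl : IsClosed {g : C(spectrum 𝕜 a, 𝕜) | Commute b (cfcHom ha g)} := by
          have hc : Continuous fun g : C(spectrum 𝕜 a, 𝕜) => cfcHom ha g :=
            cfcHom_continuous ha
          exact isClosed_eq (by continuity) (by continuity)
        exact hcl.closure_subset (mem_closure_iff_frequently.mpr hfreq)
  · rw [cfc_apply_of_not_continuousOn a hf]; exact Commute.zero_right b

end helpers

variable {H : Type*} [NormedAddCommGroup H] [InnerProductSpace ℂ H] [CompleteSpace H]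

lemma cancel_right_sa {T C D : H →L[ℂ] H} (hT : IsSelfAdjoint T)
    (hinj : ∀ x, T x = 0 → x = 0) (h : C * T = D * T) : C = D := by
  have horth : (LinearMap.range (T : H →ₗ[ℂ] H))ᗮ = ⊥ := by
    rw [Submodule.eq_bot_iff]
    intro v hv
    refine hinj v ?_
    have h0 : ∀ x : H, inner ℂ (T x) v = (0 : ℂ) := fun x =>
      (Submodule.mem_orthogonal _ v).mp hv _ ⟨x, rfl⟩
    have key := ContinuousLinearMap.adjoint_inner_left T v (T v)
    rw [hT.adjoint_eq] at key
    have h1 : inner ℂ (T v) (T v) = (0 : ℂ) := by rw [← key]; exact h0 (T v)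
    exact inner_self_eq_zero.mp h1
  have htop : (LinearMap.range (T : H →ₗ[ℂ] H)).topologicalClosure = ⊤ :=
    Submodule.topologicalClosure_eq_top_iff.mpr horth
  have hle : LinearMap.range (T : H →ₗ[ℂ] H) ≤ LinearMap.ker ((C - D : H →L[ℂ] H) : H →ₗ[ℂ] H) := by
    rintro _ ⟨x, rfl⟩
    have hx : (C * T) x = (D * T) x := by rw [h]
    simp only [ContinuousLinearMap.mul_apply] at hx
    simp [LinearMap.mem_ker, hx]
  have hd : Dense (Submodule.span ℂ (LinearMap.range (T : H →ₗ[ℂ] H) : Set H) : Set H) := by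
    rw [Submodule.span_eq]
    have : ((LinearMap.range (T : H →ₗ[ℂ] H)).topologicalClosure : Set H) = closure (LinearMap.range (T : H →ₗ[ℂ] H) : Set H) :=
      rfl
    rw [dense_iff_closure_eq, ← this, htop]
    simp
  refine ContinuousLinearMap.ext_on hd ?_
  rintro _ ⟨x, rfl⟩
  have hx : (C * T) x = (D * T) x := by rw [h]
  simpa only [ContinuousLinearMap.mul_apply, ContinuousLinearMap.coe_coe] using hx

lemma skew_re_spectrum [Nontrivial H] {Y : H →L[ℂ] H} (hY : star Y = -Y) {z : ℂ}
    (hz : z ∈ spectrum ℂ Y) : z.re = 0 := by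
  have hsa : IsSelfAdjoint (Complex.I • Y) := by
    rw [IsSelfAdjoint, star_smul, hY]
    simp [Complex.star_def, Complex.conj_I]
  have hz' : Complex.I * z ∈ spectrum ℂ (Complex.I • Y) := by
    have := spectrum.unit_smul_eq_smul Y (Units.mk0 Complex.I Complex.I_ne_zero)
    rw [show (Units.mk0 Complex.I Complex.I_ne_zero) • Y = Complex.I • Y from rfl] at this
    rw [this]
    exact ⟨z, hz, rfl⟩
  have := hsa.im_eq_zero_of_mem_spectrum hz'
  simpa using this

lemma log_exp_skew [Nontrivial H] {Y : H →L[ℂ] H} (hY : star Y = -Y) (hn : ‖Y‖ < Real.pi) :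
    cfc Complex.log (NormedSpace.exp Y) = Y := by
  have hnormal : IsStarNormal Y := ⟨by rw [Commute, SemiconjBy, hY]; simp⟩
  have hspec : ∀ z ∈ spectrum ℂ Y, z.re = 0 ∧ |z.im| < Real.pi := by
    intro z hz
    refine ⟨skew_re_spectrum hY hz, ?_⟩
    have h1 : ‖z‖ ≤ ‖Y‖ := spectrum.norm_le_norm_of_mem hz
    exact lt_of_le_of_lt (le_trans (Complex.abs_im_le_norm z) h1) hn
  have hgc : ContinuousOn Complex.exp (spectrum ℂ Y) := Complex.continuous_exp.continuousOn
  have hfc : ContinuousOn Complex.log (Complex.exp '' spectrum ℂ Y) := by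
    rintro w ⟨z, hz, rfl⟩
    obtain ⟨hre, him⟩ := hspec z hz
    refine (continuousAt_clog ?_).continuousWithinAt
    rw [Complex.mem_slitPlane_iff]
    by_cases hsin : Real.sin z.im = 0
    · left
      have hzim : z.im = 0 := by
        rw [Real.sin_eq_zero_iff_of_lt_of_lt (by linarith [abs_lt.mp him]) (abs_lt.mp him).2] at hsin
        exact hsin
      rw [Complex.exp_re, hre, hzim]
      simp [Real.exp_zero]
    · right
      rw [Complex.exp_im, hre]
      simp [Real.exp_zero, hsin]
  calc cfc Complex.log (NormedSpace.exp Y)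
      = cfc Complex.log (cfc Complex.exp Y) := by rw [CFC.complex_exp_eq_normedSpace_exp]
    _ = cfc (Complex.log ∘ Complex.exp) Y := (cfc_comp Complex.log Complex.exp Y hnormal hfc hgc).symm
    _ = cfc (id : ℂ → ℂ) Y := by
        refine cfc_congr fun z hz => ?_
        obtain ⟨hre, him⟩ := hspec z hz
        exact Complex.log_exp (by linarith [abs_lt.mp him]) (le_of_lt (abs_lt.mp him).2)
    _ = Y := cfc_id ℂ Y

/-- An orthogonal projection: a selfadjoint idempotent bounded operator. -/
def IsOrthogonalProjection (P : H →L[ℂ] H) : Prop :=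
  IsSelfAdjoint P ∧ P * P = P

/-- A symmetry: a selfadjoint unitary operator. -/
def IsSymmetry (V : H →L[ℂ] H) : Prop :=
  IsSelfAdjoint V ∧ V * V = 1

/-- Two orthogonal projections are in generic position if the four canonical
intersections of their ranges and kernels are trivial. -/
def GenericPosition (P Q : H →L[ℂ] H) : Prop :=
  LinearMap.range (P : H →ₗ[ℂ] H) ⊓ LinearMap.range (Q : H →ₗ[ℂ] H) = ⊥ ∧
  LinearMap.range (P : H →ₗ[ℂ] H) ⊓ LinearMap.ker (Q : H →ₗ[ℂ] H) = ⊥ ∧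
  LinearMap.ker (P : H →ₗ[ℂ] H) ⊓ LinearMap.range (Q : H →ₗ[ℂ] H) = ⊥ ∧
  LinearMap.ker (P : H →ₗ[ℂ] H) ⊓ LinearMap.ker (Q : H →ₗ[ℂ] H) = ⊥


open Pointwise in
set_option maxHeartbeats 4000000 in
/-- If the Davis symmetries of two generic pairs with the same difference `A`
satisfy `‖V - V₀‖ < 2`, then there is a unique anti-Hermitian `Z` of norm `< π/2`, commuting
with `A` and anticommuting with `V₀`, with `e^Z P₀ e^{-Z} = P` and `e^Z Q₀ e^{-Z} = Q`. -/
theorem exponential_unique_of_close (P₀ Q₀ P Q V₀ V : H →L[ℂ] H)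
    (hP₀ : IsOrthogonalProjection P₀) (hQ₀ : IsOrthogonalProjection Q₀)
    (hP : IsOrthogonalProjection P) (hQ : IsOrthogonalProjection Q)
    (hgen₀ : GenericPosition P₀ Q₀) (hgen : GenericPosition P Q)
    (hdiff : P₀ - Q₀ = P - Q)
    (hV₀ : IsSymmetry V₀) (hV₀c : Commute V₀ (P₀ + Q₀ - 1))
    (hV₀p : (V₀ * (P₀ + Q₀ - 1)).IsPositive)
    (hV : IsSymmetry V) (hVc : Commute V (P + Q - 1))
    (hVp : (V * (P + Q - 1)).IsPositive)
    (hclose : ‖V - V₀‖ < 2) :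
    ∃! Z : H →L[ℂ] H, star Z = -Z ∧ ‖Z‖ < Real.pi / 2 ∧
      Z * (P₀ - Q₀) = (P₀ - Q₀) * Z ∧ Z * V₀ = -(V₀ * Z) ∧
      NormedSpace.exp Z * P₀ * NormedSpace.exp (-Z) = P ∧
      NormedSpace.exp Z * Q₀ * NormedSpace.exp (-Z) = Q := by
  rcases subsingleton_or_nontrivial H with hsub | hnt
  · refine ⟨0, ⟨by simp, by simpa using Real.pi_div_two_pos, by simp,
      by simp, Subsingleton.elim _ _, Subsingleton.elim _ _⟩,
      fun Y _ => Subsingleton.elim Y 0⟩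
  obtain ⟨hP₀sa, hP₀i⟩ := hP₀
  obtain ⟨hQ₀sa, hQ₀i⟩ := hQ₀
  obtain ⟨hPsa, hPi⟩ := hP
  obtain ⟨hQsa, hQi⟩ := hQ
  obtain ⟨hV₀sa, hV₀u⟩ := hV₀
  obtain ⟨hVsa, hVu⟩ := hV
  set A : H →L[ℂ] H := P₀ - Q₀ with hAdef
  set B₀ : H →L[ℂ] H := P₀ + Q₀ - 1 with hB₀def
  set B : H →L[ℂ] H := P + Q - 1 with hBdef
  have hdiff' : P₀ - Q₀ = P - Q := by rw [← hAdef]; exact hdiff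
  have hAsa : IsSelfAdjoint A := hP₀sa.sub hQ₀sa
  have hB₀sa : IsSelfAdjoint B₀ := (hP₀sa.add hQ₀sa).sub (IsSelfAdjoint.one (H →L[ℂ] H))
  have hBsa : IsSelfAdjoint B := (hPsa.add hQsa).sub (IsSelfAdjoint.one (H →L[ℂ] H))
  have hB₀sq : B₀ * B₀ = 1 - A * A := by
    rw [hB₀def, hAdef]
    simp only [mul_sub, sub_mul, mul_add, add_mul, mul_one, one_mul, hP₀i, hQ₀i]
    abel
  have hBsq : B * B = 1 - A * A := by
    rw [hBdef, hAdef, hdiff']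
    simp only [mul_sub, sub_mul, mul_add, add_mul, mul_one, one_mul, hPi, hQi]
    abel
  have hB₀A : A * B₀ = -(B₀ * A) := by
    rw [hB₀def, hAdef]
    simp only [mul_sub, sub_mul, mul_add, add_mul, mul_one, one_mul, hP₀i, hQ₀i]
    abel
  have hBA : A * B = -(B * A) := by
    rw [hBdef, hAdef, hdiff']
    simp only [mul_sub, sub_mul, mul_add, add_mul, mul_one, one_mul, hPi, hQi]
    abel
  have hB₀inj : ∀ x, B₀ x = 0 → x = 0 := by
    intro x hx
    rw [hB₀def] at hx
    simp only [ContinuousLinearMap.sub_apply, ContinuousLinearMap.add_apply,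
      ContinuousLinearMap.one_apply] at hx
    have h1 : P₀ x + Q₀ x = x := by rwa [sub_eq_zero] at hx
    have hPP : P₀ (P₀ x) = P₀ x := by
      have := congrArg (fun f : H →L[ℂ] H => f x) hP₀i
      simpa [ContinuousLinearMap.mul_apply] using this
    have hPQ : P₀ (Q₀ x) = 0 := by
      have hQx : Q₀ x = x - P₀ x := eq_sub_of_add_eq' h1
      rw [hQx, map_sub, hPP, sub_self]
    have hm : Q₀ x ∈ LinearMap.ker (P₀ : H →ₗ[ℂ] H) ⊓ LinearMap.range (Q₀ : H →ₗ[ℂ] H) :=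
      Submodule.mem_inf.mpr ⟨LinearMap.mem_ker.mpr hPQ, ⟨x, rfl⟩⟩
    rw [hgen₀.2.2.1] at hm
    have hQ0 : Q₀ x = 0 := (Submodule.mem_bot ℂ).mp hm
    have hPx : P₀ x = x := by rwa [hQ0, add_zero] at h1
    have hm2 : x ∈ LinearMap.range (P₀ : H →ₗ[ℂ] H) ⊓ LinearMap.ker (Q₀ : H →ₗ[ℂ] H) :=
      Submodule.mem_inf.mpr ⟨⟨x, hPx⟩, LinearMap.mem_ker.mpr hQ0⟩
    rw [hgen₀.2.1] at hm2
    exact (Submodule.mem_bot ℂ).mp hm2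
  have hBinj : ∀ x, B x = 0 → x = 0 := by
    intro x hx
    rw [hBdef] at hx
    simp only [ContinuousLinearMap.sub_apply, ContinuousLinearMap.add_apply,
      ContinuousLinearMap.one_apply] at hx
    have h1 : P x + Q x = x := by rwa [sub_eq_zero] at hx
    have hPP : P (P x) = P x := by
      have := congrArg (fun f : H →L[ℂ] H => f x) hPi
      simpa [ContinuousLinearMap.mul_apply] using this
    have hPQ : P (Q x) = 0 := by
      have hQx : Q x = x - P x := eq_sub_of_add_eq' h1
      rw [hQx, map_sub, hPP, sub_self]
    have hm : Q x ∈ LinearMap.ker (P : H →ₗ[ℂ] H) ⊓ LinearMap.range (Q : H →ₗ[ℂ] H) :=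
      Submodule.mem_inf.mpr ⟨LinearMap.mem_ker.mpr hPQ, ⟨x, rfl⟩⟩
    rw [hgen.2.2.1] at hm
    have hQ0 : Q x = 0 := (Submodule.mem_bot ℂ).mp hm
    have hPx : P x = x := by rwa [hQ0, add_zero] at h1
    have hm2 : x ∈ LinearMap.range (P : H →ₗ[ℂ] H) ⊓ LinearMap.ker (Q : H →ₗ[ℂ] H) :=
      Submodule.mem_inf.mpr ⟨⟨x, hPx⟩, LinearMap.mem_ker.mpr hQ0⟩
    rw [hgen.2.1] at hm2
    exact (Submodule.mem_bot ℂ).mp hm2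
  have hAAsa : IsSelfAdjoint (1 - A * A) := by
    rw [IsSelfAdjoint, star_sub, star_one, star_mul, hAsa.star_eq]
  have hAApos : (0 : H →L[ℂ] H) ≤ 1 - A * A := by
    rw [← hB₀sq]
    have := star_mul_self_nonneg B₀
    rwa [hB₀sa.star_eq] at this
  set T : H →L[ℂ] H := cfc Real.sqrt (1 - A * A) with hTdef
  have hTsa : IsSelfAdjoint T := cfc_predicate Real.sqrt (1 - A * A)
  have hTpos : (0 : H →L[ℂ] H) ≤ T := cfc_nonneg (fun x _ => Real.sqrt_nonneg x)
  have hTsq : T * T = 1 - A * A := by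
    rw [hTdef, ← cfc_mul Real.sqrt Real.sqrt (1 - A * A) Real.continuous_sqrt.continuousOn Real.continuous_sqrt.continuousOn]
    have h1 : cfc (fun x => Real.sqrt x * Real.sqrt x) (1 - A * A)
        = cfc (fun x : ℝ => x) (1 - A * A) :=
      cfc_congr fun x hx => Real.mul_self_sqrt (spectrum_nonneg_of_nonneg hAApos hx)
    rw [h1, cfc_id' ℝ (1 - A * A) hAAsa]
  have hsq₀ : (V₀ * B₀) * (V₀ * B₀) = 1 - A * A := by
    have hc : B₀ * (V₀ * B₀) = V₀ * (B₀ * B₀) := by rw [← mul_assoc, ← hV₀c.eq, mul_assoc]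
    calc (V₀ * B₀) * (V₀ * B₀) = V₀ * (B₀ * (V₀ * B₀)) := by rw [mul_assoc]
      _ = V₀ * (V₀ * (B₀ * B₀)) := by rw [hc]
      _ = (V₀ * V₀) * (B₀ * B₀) := by rw [mul_assoc]
      _ = 1 - A * A := by rw [hV₀u, hB₀sq, one_mul]
  have hsq : (V * B) * (V * B) = 1 - A * A := by
    have hc : B * (V * B) = V * (B * B) := by rw [← mul_assoc, ← hVc.eq, mul_assoc]
    calc (V * B) * (V * B) = V * (B * (V * B)) := by rw [mul_assoc]
      _ = V * (V * (B * B)) := by rw [hc]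
      _ = (V * V) * (B * B) := by rw [mul_assoc]
      _ = 1 - A * A := by rw [hVu, hBsq, one_mul]
  have hpos₀ : (0 : H →L[ℂ] H) ≤ V₀ * B₀ := (ContinuousLinearMap.nonneg_iff_isPositive _).mpr hV₀p
  have hpos : (0 : H →L[ℂ] H) ≤ V * B := (ContinuousLinearMap.nonneg_iff_isPositive _).mpr hVp
  have hTV₀ : T = V₀ * B₀ := (CFC.sqrt_unique hTsq hTpos).symm.trans (CFC.sqrt_unique hsq₀ hpos₀)
  have hTV : T = V * B := (CFC.sqrt_unique hTsq hTpos).symm.trans (CFC.sqrt_unique hsq hpos)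
  have hTinj : ∀ x, T x = 0 → x = 0 := by
    intro x hx
    rw [hTV₀] at hx
    have h1 : V₀ (B₀ x) = 0 := by simpa [ContinuousLinearMap.mul_apply] using hx
    have h2 : V₀ (V₀ (B₀ x)) = B₀ x := by
      have := congrArg (fun f : H →L[ℂ] H => f (B₀ x)) hV₀u
      simpa [ContinuousLinearMap.mul_apply] using this
    have h3 : B₀ x = 0 := by rw [← h2, h1, map_zero]
    exact hB₀inj x h3
  have hAT : Commute A T := by
    rw [hTdef]
    exact commute_cfc' hAAsa
      ((Commute.one_right A).sub_right ((Commute.refl A).mul_right (Commute.refl A)))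
      (by rw [hAAsa.star_eq]
          exact (Commute.one_right A).sub_right ((Commute.refl A).mul_right (Commute.refl A)))
      Real.sqrt
  have hAV₀ : A * V₀ = -(V₀ * A) := by
    apply cancel_right_sa hB₀sa hB₀inj
    have h1 : A * (V₀ * B₀) = (V₀ * B₀) * A := by rw [← hTV₀]; exact hAT.eq
    have hBA' : B₀ * A = -(A * B₀) := by rw [hB₀A, neg_neg]
    calc (A * V₀) * B₀ = A * (V₀ * B₀) := by rw [mul_assoc]
      _ = (V₀ * B₀) * A := h1
      _ = V₀ * (B₀ * A) := by rw [mul_assoc]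
      _ = V₀ * (-(A * B₀)) := by rw [hBA']
      _ = -(V₀ * A) * B₀ := by rw [mul_neg, neg_mul, mul_assoc]
  have hAV : A * V = -(V * A) := by
    apply cancel_right_sa hBsa hBinj
    have h1 : A * (V * B) = (V * B) * A := by rw [← hTV]; exact hAT.eq
    have hBA' : B * A = -(A * B) := by rw [hBA, neg_neg]
    calc (A * V) * B = A * (V * B) := by rw [mul_assoc]
      _ = (V * B) * A := h1
      _ = V * (B * A) := by rw [mul_assoc]
      _ = V * (-(A * B)) := by rw [hBA']
      _ = -(V * A) * B := by rw [mul_neg, neg_mul, mul_assoc]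
  set W : H →L[ℂ] H := V * V₀ with hWdef
  have hWst : star W = V₀ * V := by rw [hWdef, star_mul, hV₀sa.star_eq, hVsa.star_eq]
  have hWl : star W * W = 1 := by
    rw [hWst, hWdef]
    calc (V₀ * V) * (V * V₀) = V₀ * ((V * V) * V₀) := by
          rw [mul_assoc, ← mul_assoc V V V₀]
      _ = 1 := by rw [hVu, one_mul, hV₀u]
  have hWr : W * star W = 1 := by
    rw [hWst, hWdef]
    calc (V * V₀) * (V₀ * V) = V * ((V₀ * V₀) * V) := by
          rw [mul_assoc, ← mul_assoc V₀ V₀ V]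
      _ = 1 := by rw [hV₀u, one_mul, hVu]
  have hWnormal : IsStarNormal W := ⟨by rw [Commute, SemiconjBy, hWl, hWr]⟩
  have hWu : W ∈ unitary (H →L[ℂ] H) := ⟨hWl, hWr⟩
  have hWcirc : ∀ z ∈ spectrum ℂ W, ‖z‖ = 1 := by
    intro z hz
    have h1 := spectrum.subset_circle_of_unitary hWu hz
    simpa using mem_sphere_zero_iff_norm.mp h1
  have hc0 : (0:ℝ) ≤ ‖V - V₀‖ := norm_nonneg _
  have hV₀n : ‖V₀‖ ≤ 1 := by
    have h1 : ‖V₀‖ * ‖V₀‖ = 1 := by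
      rw [← CStarRing.norm_star_mul_self (x := V₀), hV₀sa.star_eq, hV₀u, norm_one]
    nlinarith [norm_nonneg V₀]
  have hWle : ‖W - 1‖ ≤ ‖V - V₀‖ := by
    have he : W - 1 = (V - V₀) * V₀ := by rw [hWdef, sub_mul, hV₀u]
    rw [he]
    calc ‖(V - V₀) * V₀‖ ≤ ‖V - V₀‖ * ‖V₀‖ := norm_mul_le _ _
      _ ≤ ‖V - V₀‖ * 1 := mul_le_mul_of_nonneg_left hV₀n hc0
      _ = ‖V - V₀‖ := mul_one _
  have hWre : ∀ z ∈ spectrum ℂ W, 1 - ‖V - V₀‖^2/2 ≤ z.re := by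
    intro z hz
    have hz1 : z - 1 ∈ spectrum ℂ (W - 1) := by
      have hmm : z - 1 ∈ spectrum ℂ W - ({1} : Set ℂ) := Set.sub_mem_sub hz rfl
      rw [spectrum.sub_singleton_eq] at hmm
      simpa using hmm
    have hb : ‖z - 1‖ ≤ ‖V - V₀‖ := by
      have := spectrum.norm_le_norm_of_mem hz1
      exact this.trans hWle
    have habs : ‖z‖ = 1 := hWcirc z hz
    have h1 : (z.re)^2 + (z.im)^2 = 1 := by
      have h2 := Complex.sq_norm z
      rw [habs, Complex.normSq_apply] at h2
      nlinarith [h2]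
    have h2 : (z.re - 1)^2 + (z.im)^2 ≤ ‖V - V₀‖^2 := by
      have h3 := Complex.sq_norm (z - 1)
      rw [Complex.normSq_apply, Complex.sub_re, Complex.sub_im, Complex.one_re,
        Complex.one_im, sub_zero] at h3
      nlinarith [norm_nonneg (z - 1)]
    nlinarith
  set θ : ℝ := Real.arccos (1 - ‖V - V₀‖^2/2) with hθdef
  have hθlt : θ < Real.pi := by
    have hne : θ ≠ Real.pi := by
      rw [hθdef, Ne, Real.arccos_eq_pi, not_le]
      nlinarith
    exact lt_of_le_of_ne (Real.arccos_le_pi _) hne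
  have hθ0 : 0 ≤ θ := Real.arccos_nonneg _
  have hlog : ∀ z ∈ spectrum ℂ W, Complex.log z = (z.arg : ℂ) * Complex.I := by
    intro z hz
    have habs := hWcirc z hz
    apply Complex.ext
    · simp [Complex.log_re, habs]
    · simp [Complex.log_im]
  have hlogbound : ∀ z ∈ spectrum ℂ W, ‖Complex.log z / 2‖ ≤ θ / 2 := by
    intro z hz
    have habs := hWcirc z hz
    have hzne : z ≠ 0 := by
      intro h; rw [h] at habs; simp at habs
    have hre : Real.cos z.arg = z.re := by rw [Complex.cos_arg hzne, habs, div_one]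
    have hargabs : |z.arg| = Real.arccos z.re := by
      rw [← hre, ← Real.cos_abs]
      exact (Real.arccos_cos (abs_nonneg _) (Complex.abs_arg_le_pi z)).symm
    have hmono : Real.arccos z.re ≤ θ := by
      rw [hθdef, Real.arccos_eq_pi_div_two_sub_arcsin, Real.arccos_eq_pi_div_two_sub_arcsin]
      have := Real.monotone_arcsin (hWre z hz)
      linarith
    have hnormlog : ‖Complex.log z‖ = |z.arg| := by
      rw [hlog z hz, norm_mul, Complex.norm_I, mul_one, Complex.norm_real, Real.norm_eq_abs]
    rw [norm_div]
    have h2 : ‖(2:ℂ)‖ = 2 := by norm_num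
    rw [h2, hnormlog]
    rw [hargabs]
    linarith
  have hlogcont : ContinuousOn Complex.log (spectrum ℂ W) := by
    intro z hz
    refine (continuousAt_clog ?_).continuousWithinAt
    rw [Complex.mem_slitPlane_iff]
    by_cases him : z.im = 0
    · left
      have habs := hWcirc z hz
      have h1 : z.re^2 = 1 := by
        have h2 := Complex.sq_norm z
        rw [habs, Complex.normSq_apply, him] at h2
        nlinarith [h2]
      have h3 := hWre z hz
      have h4 : z.re = 1 ∨ z.re = -1 := by
        rcases mul_eq_zero.mp (show (z.re - 1) * (z.re + 1) = 0 by nlinarith) with h | h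
        · left; linarith
        · right; linarith
      rcases h4 with h | h
      · rw [h]; norm_num
      · exfalso; rw [h] at h3; nlinarith
    · right; exact him
  have hfcont : ContinuousOn (fun z => Complex.log z / 2) (spectrum ℂ W) := hlogcont.div_const _
  set Z : H →L[ℂ] H := cfc (fun z => Complex.log z / 2) W with hZdef
  have hZnorm2 : ‖Z‖ ≤ θ / 2 := norm_cfc_le (by linarith) hlogbound
  have hZnorm : ‖Z‖ < Real.pi / 2 := lt_of_le_of_lt hZnorm2 (by linarith)
  have hZskew : star Z = -Z := by
    rw [hZdef, ← cfc_star]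
    have h1 : cfc (fun z => star (Complex.log z / 2)) W
        = cfc (fun z => -(Complex.log z / 2)) W := by
      refine cfc_congr fun z hz => ?_
      rw [hlog z hz, star_div₀, star_mul', Complex.star_def, Complex.conj_I,
        Complex.conj_ofReal, map_ofNat]
      ring
    rw [h1, cfc_neg]
  have hAW : Commute A W := by
    rw [hWdef]
    show A * (V * V₀) = (V * V₀) * A
    calc A * (V * V₀) = (A * V) * V₀ := by rw [mul_assoc]
      _ = (-(V * A)) * V₀ := by rw [hAV]
      _ = -(V * (A * V₀)) := by rw [neg_mul, mul_assoc]
      _ = -(V * (-(V₀ * A))) := by rw [hAV₀]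
      _ = (V * V₀) * A := by rw [mul_neg, neg_neg, ← mul_assoc]
  have hAWst : Commute A (star W) := by
    rw [hWst]
    show A * (V₀ * V) = (V₀ * V) * A
    calc A * (V₀ * V) = (A * V₀) * V := by rw [mul_assoc]
      _ = (-(V₀ * A)) * V := by rw [hAV₀]
      _ = -(V₀ * (A * V)) := by rw [neg_mul, mul_assoc]
      _ = -(V₀ * (-(V * A))) := by rw [hAV]
      _ = (V₀ * V) * A := by rw [mul_neg, neg_neg, ← mul_assoc]
  have hZA : Commute Z A := (commute_cfc' hWnormal hAW hAWst _).symm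
  have hZZlog : Z + Z = cfc Complex.log W := by
    rw [hZdef, ← cfc_add (a := W) _ _ hfcont hfcont]
    exact (cfc_congr fun z _ => by ring).symm
  have hexpZZ : NormedSpace.exp (Z + Z) = W := by
    rw [hZZlog]
    have hnlog : IsStarNormal (cfc Complex.log W) := cfc_predicate _ W
    rw [← CFC.complex_exp_eq_normedSpace_exp hnlog,
      ← cfc_comp Complex.exp Complex.log W hWnormal Complex.continuous_exp.continuousOn hlogcont]
    calc cfc (Complex.exp ∘ Complex.log) W = cfc (id : ℂ → ℂ) W := by
          refine cfc_congr fun z hz => ?_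
          have habs := hWcirc z hz
          have hzne : z ≠ 0 := by intro h; rw [h] at habs; simp at habs
          exact Complex.exp_log hzne
      _ = W := cfc_id ℂ W
  have huniq : ∀ Y : H →L[ℂ] H, star Y = -Y → ‖Y‖ < Real.pi / 2 →
      NormedSpace.exp (Y + Y) = W → Y = Z := by
    intro Y hs hn hexp
    have hskew2 : star (Y + Y) = -(Y + Y) := by rw [star_add, hs]; abel
    have hZskew2 : star (Z + Z) = -(Z + Z) := by rw [star_add, hZskew]; abel
    have hn2 : ‖Y + Y‖ < Real.pi := lt_of_le_of_lt (norm_add_le _ _) (by linarith)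
    have hZn2 : ‖Z + Z‖ < Real.pi := lt_of_le_of_lt (norm_add_le _ _) (by linarith)
    have e1 := log_exp_skew hskew2 hn2
    have e2 := log_exp_skew hZskew2 hZn2
    rw [hexp] at e1
    rw [hexpZZ] at e2
    have h1 : Y + Y = Z + Z := by rw [← e1, ← e2]
    have h2 : (2:ℝ) • Y = (2:ℝ) • Z := by rw [two_smul, two_smul]; exact h1
    exact smul_right_injective _ two_ne_zero h2
  let +nondep : NormedAlgebra ℚ (H →L[ℂ] H) := .restrictScalars ℚ ℂ (H →L[ℂ] H)
  have hEE : ∀ Y : H →L[ℂ] H, NormedSpace.exp Y * NormedSpace.exp (-Y) = 1 := by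
    intro Y
    rw [← NormedSpace.exp_add_of_commute ((Commute.refl Y).neg_right)]
    simp [NormedSpace.exp_zero]
  let u : (H →L[ℂ] H)ˣ := ⟨V₀, V₀, hV₀u, hV₀u⟩
  have hexpV₀ : ∀ Y : H →L[ℂ] H, V₀ * Y * V₀ = -Y →
      NormedSpace.exp Y * V₀ = V₀ * NormedSpace.exp (-Y) := by
    intro Y hY
    have hconj := NormedSpace.exp_units_conj u Y
    rw [show (↑u : H →L[ℂ] H) * Y * (↑u⁻¹ : H →L[ℂ] H) = V₀ * Y * V₀ from rfl, hY] at hconj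
    rw [show (↑u : H →L[ℂ] H) * NormedSpace.exp Y * (↑u⁻¹ : H →L[ℂ] H)
      = V₀ * NormedSpace.exp Y * V₀ from rfl] at hconj
    have h2 : V₀ * NormedSpace.exp (-Y) = NormedSpace.exp Y * V₀ := by
      rw [hconj]
      calc V₀ * (V₀ * NormedSpace.exp Y * V₀)
          = ((V₀ * V₀) * NormedSpace.exp Y) * V₀ := by rw [← mul_assoc, ← mul_assoc]
        _ = NormedSpace.exp Y * V₀ := by rw [hV₀u, one_mul]
    exact h2.symm
  have hexpnegZZ : NormedSpace.exp (-(Z + Z)) = star W := by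
    have h1 := hEE (Z + Z)
    rw [hexpZZ] at h1
    calc NormedSpace.exp (-(Z + Z))
        = (star W * W) * NormedSpace.exp (-(Z + Z)) := by rw [hWl, one_mul]
      _ = star W * (W * NormedSpace.exp (-(Z + Z))) := by rw [mul_assoc]
      _ = star W := by rw [h1, mul_one]
  have hZV₀conj : V₀ * Z * V₀ = -Z := by
    have hYdef : -(V₀ * Z * V₀) = -(V₀ * Z * V₀) := rfl
    have hstar1 : star (V₀ * Z * V₀) = -(V₀ * Z * V₀) := by
      rw [star_mul, star_mul, hV₀sa.star_eq, hZskew]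
      noncomm_ring
    have hYskew : star (-(V₀ * Z * V₀)) = -(-(V₀ * Z * V₀)) := by rw [star_neg, hstar1]
    have hYnorm : ‖-(V₀ * Z * V₀)‖ < Real.pi / 2 := by
      rw [norm_neg]
      have k1 : ‖V₀ * Z * V₀‖ ≤ ‖V₀ * Z‖ * ‖V₀‖ := norm_mul_le _ _
      have k2 : ‖V₀ * Z‖ ≤ ‖V₀‖ * ‖Z‖ := norm_mul_le _ _
      nlinarith [norm_nonneg (V₀ * Z), norm_nonneg Z, norm_nonneg V₀]
    have hYexp : NormedSpace.exp (-(V₀ * Z * V₀) + -(V₀ * Z * V₀)) = W := by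
      have hYY : -(V₀ * Z * V₀) + -(V₀ * Z * V₀) = V₀ * (-(Z + Z)) * V₀ := by noncomm_ring
      rw [hYY]
      have hconj := NormedSpace.exp_units_conj u (-(Z + Z))
      rw [show (↑u : H →L[ℂ] H) * (-(Z + Z)) * (↑u⁻¹ : H →L[ℂ] H)
        = V₀ * (-(Z + Z)) * V₀ from rfl] at hconj
      rw [show (↑u : H →L[ℂ] H) * NormedSpace.exp (-(Z + Z)) * (↑u⁻¹ : H →L[ℂ] H)
        = V₀ * NormedSpace.exp (-(Z + Z)) * V₀ from rfl] at hconj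
      rw [hconj, hexpnegZZ, hWst]
      calc V₀ * (V₀ * V) * V₀ = ((V₀ * V₀) * V) * V₀ := by rw [← mul_assoc]
        _ = V * V₀ := by rw [hV₀u, one_mul]
        _ = W := hWdef.symm
    exact neg_eq_iff_eq_neg.mp (huniq _ hYskew hYnorm hYexp)
  have hZV₀ : Z * V₀ = -(V₀ * Z) := by
    calc Z * V₀ = (V₀ * V₀) * (Z * V₀) := by rw [hV₀u, one_mul]
      _ = V₀ * (V₀ * Z * V₀) := by rw [mul_assoc, ← mul_assoc V₀ Z V₀]
      _ = V₀ * (-Z) := by rw [hZV₀conj]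
      _ = -(V₀ * Z) := by rw [mul_neg]
  have hB₀VT : B₀ = V₀ * T := by rw [hTV₀, ← mul_assoc, hV₀u, one_mul]
  have hBVT : B = V * T := by rw [hTV, ← mul_assoc, hVu, one_mul]
  have hmain : ∀ Y : H →L[ℂ] H, Commute Y A → V₀ * Y * V₀ = -Y →
      NormedSpace.exp Y * B₀ * NormedSpace.exp (-Y)
        = V₀ * NormedSpace.exp (-(Y + Y)) * T := by
    intro Y hYA hYV₀
    have hYT : Commute Y T := by
      rw [hTdef]
      exact commute_cfc' hAAsa
        ((Commute.one_right Y).sub_right (hYA.mul_right hYA))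
        (by rw [hAAsa.star_eq]; exact (Commute.one_right Y).sub_right (hYA.mul_right hYA))
        Real.sqrt
    have hcomm2 : NormedSpace.exp (-Y) * T = T * NormedSpace.exp (-Y) :=
      ((hYT.neg_left).exp_left).eq
    have hexpadd : NormedSpace.exp (-(Y + Y))
        = NormedSpace.exp (-Y) * NormedSpace.exp (-Y) := by
      rw [show -(Y + Y) = -Y + -Y by abel, NormedSpace.exp_add_of_commute (Commute.refl (-Y))]
    calc NormedSpace.exp Y * B₀ * NormedSpace.exp (-Y)
        = (NormedSpace.exp Y * V₀) * (T * NormedSpace.exp (-Y)) := by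
          rw [hB₀VT]; noncomm_ring
      _ = (V₀ * NormedSpace.exp (-Y)) * (NormedSpace.exp (-Y) * T) := by
          rw [hexpV₀ Y hYV₀, hcomm2]
      _ = V₀ * (NormedSpace.exp (-Y) * NormedSpace.exp (-Y)) * T := by noncomm_ring
      _ = V₀ * NormedSpace.exp (-(Y + Y)) * T := by rw [hexpadd]
  have hconjB₀ : NormedSpace.exp Z * B₀ * NormedSpace.exp (-Z) = B := by
    rw [hmain Z hZA hZV₀conj, hexpnegZZ, hWst]
    calc V₀ * (V₀ * V) * T = ((V₀ * V₀) * V) * T := by rw [← mul_assoc]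
      _ = V * T := by rw [hV₀u, one_mul]
      _ = B := hBVT.symm
  have hconjA : NormedSpace.exp Z * A * NormedSpace.exp (-Z) = A := by
    have h1 : NormedSpace.exp Z * A = A * NormedSpace.exp Z := (hZA.exp_left).eq
    rw [h1, mul_assoc, hEE Z, mul_one]
  have hsmul2 : Function.Injective fun X : H →L[ℂ] H => (2:ℂ) • X :=
    smul_right_injective _ two_ne_zero
  have hPconj : NormedSpace.exp Z * P₀ * NormedSpace.exp (-Z) = P := by
    apply hsmul2
    show (2:ℂ) • (NormedSpace.exp Z * P₀ * NormedSpace.exp (-Z)) = (2:ℂ) • P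
    have e₀ : (2:ℂ) • P₀ = 1 + A + B₀ := by rw [hAdef, hB₀def, two_smul]; abel
    have e : (2:ℂ) • P = 1 + A + B := by rw [hAdef, hdiff', hBdef, two_smul]; abel
    calc (2:ℂ) • (NormedSpace.exp Z * P₀ * NormedSpace.exp (-Z))
        = NormedSpace.exp Z * ((2:ℂ) • P₀) * NormedSpace.exp (-Z) := by
          simp only [smul_mul_assoc, mul_smul_comm]
      _ = NormedSpace.exp Z * (1 + A + B₀) * NormedSpace.exp (-Z) := by rw [e₀]
      _ = NormedSpace.exp Z * 1 * NormedSpace.exp (-Z)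
          + NormedSpace.exp Z * A * NormedSpace.exp (-Z)
          + NormedSpace.exp Z * B₀ * NormedSpace.exp (-Z) := by noncomm_ring
      _ = 1 + A + B := by rw [mul_one, hEE Z, hconjA, hconjB₀]
      _ = (2:ℂ) • P := e.symm
  have hQconj : NormedSpace.exp Z * Q₀ * NormedSpace.exp (-Z) = Q := by
    apply hsmul2
    show (2:ℂ) • (NormedSpace.exp Z * Q₀ * NormedSpace.exp (-Z)) = (2:ℂ) • Q
    have e₀ : (2:ℂ) • Q₀ = 1 - A + B₀ := by rw [hAdef, hB₀def, two_smul]; abel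
    have e : (2:ℂ) • Q = 1 - A + B := by rw [hAdef, hdiff', hBdef, two_smul]; abel
    calc (2:ℂ) • (NormedSpace.exp Z * Q₀ * NormedSpace.exp (-Z))
        = NormedSpace.exp Z * ((2:ℂ) • Q₀) * NormedSpace.exp (-Z) := by
          simp only [smul_mul_assoc, mul_smul_comm]
      _ = NormedSpace.exp Z * (1 - A + B₀) * NormedSpace.exp (-Z) := by rw [e₀]
      _ = NormedSpace.exp Z * 1 * NormedSpace.exp (-Z)
          - NormedSpace.exp Z * A * NormedSpace.exp (-Z)
          + NormedSpace.exp Z * B₀ * NormedSpace.exp (-Z) := by noncomm_ring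
      _ = 1 - A + B := by rw [mul_one, hEE Z, hconjA, hconjB₀]
      _ = (2:ℂ) • Q := e.symm
  refine ⟨Z, ⟨hZskew, hZnorm, hZA.eq, hZV₀, hPconj, hQconj⟩, ?_⟩
  rintro Y ⟨hs, hn, hcA, hcV₀, hp, hq⟩
  apply huniq Y hs hn
  have hYA : Commute Y A := hcA
  have hYV₀conj : V₀ * Y * V₀ = -Y := by
    calc V₀ * Y * V₀ = V₀ * (Y * V₀) := by rw [mul_assoc]
      _ = V₀ * (-(V₀ * Y)) := by rw [hcV₀]
      _ = -((V₀ * V₀) * Y) := by rw [mul_neg, ← mul_assoc]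
      _ = -Y := by rw [hV₀u, one_mul]
  have hconjB₀' : NormedSpace.exp Y * B₀ * NormedSpace.exp (-Y) = B := by
    calc NormedSpace.exp Y * B₀ * NormedSpace.exp (-Y)
        = NormedSpace.exp Y * P₀ * NormedSpace.exp (-Y)
          + NormedSpace.exp Y * Q₀ * NormedSpace.exp (-Y)
          - NormedSpace.exp Y * 1 * NormedSpace.exp (-Y) := by rw [hB₀def]; noncomm_ring
      _ = P + Q - 1 := by rw [hp, hq, mul_one, hEE Y]
      _ = B := hBdef.symm
  have hmainY := hmain Y hYA hYV₀conj
  have hVT : V₀ * NormedSpace.exp (-(Y + Y)) * T = V * T := by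
    rw [← hmainY, hconjB₀', hBVT]
  have hcancel : V₀ * NormedSpace.exp (-(Y + Y)) = V := cancel_right_sa hTsa hTinj hVT
  have hexpY : NormedSpace.exp (-(Y + Y)) = star W := by
    calc NormedSpace.exp (-(Y + Y))
        = (V₀ * V₀) * NormedSpace.exp (-(Y + Y)) := by rw [hV₀u, one_mul]
      _ = V₀ * (V₀ * NormedSpace.exp (-(Y + Y))) := by rw [mul_assoc]
      _ = V₀ * V := by rw [hcancel]
      _ = star W := hWst.symm
  have hEy := hEE (Y + Y)
  calc NormedSpace.exp (Y + Y)
      = NormedSpace.exp (Y + Y) * (star W * W) := by rw [hWl, mul_one]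
    _ = (NormedSpace.exp (Y + Y) * NormedSpace.exp (-(Y + Y))) * W := by
        rw [← hexpY, mul_assoc]
    _ = W := by rw [hEy, one_mul]
end

section
/- Let L be a complex Hilbert space and let X, Y ∈ B(L) with X* = -X, Y* = -Y, and XY = YX. On H = L ⊕ L consider the block operator Z = [[X, Y], [Y, -X]] (which satisfies Z* = -Z). Then for every D' ∈ B(L) with D'* = -D', one has ‖Z‖ ≤ ‖Z + D‖, where D = [[D', 0], [0, D']]. -/
open ContinuousLinearMap

variable {L : Type*} [NormedAddCommGroup L] [InnerProductSpace ℂ L] [CompleteSpace L]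

/-- The block operator `[[X, Y], [Z, W]]` on the Hilbert-space direct sum `L ⊕ L`
(realized as `WithLp 2 (L × L)`), acting by `(ξ, η) ↦ (Xξ + Yη, Zξ + Wη)`. -/
noncomputable def blockOp (X Y Z W : L →L[ℂ] L) :
    WithLp 2 (L × L) →L[ℂ] WithLp 2 (L × L) :=
  (WithLp.prodContinuousLinearEquiv 2 ℂ L L).symm.toContinuousLinearMap ∘L
    (((X.coprod Y).prod (Z.coprod W)) ∘L
      (WithLp.prodContinuousLinearEquiv 2 ℂ L L).toContinuousLinearMap)

/-- The "rotation" `(ξ, η) ↦ (η, -ξ)` as a linear isometry equiv of `WithLp 2 (L × L)`. -/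
noncomputable def rotJ : WithLp 2 (L × L) ≃ₗᵢ[ℂ] WithLp 2 (L × L) where
  toLinearEquiv :=
    (WithLp.linearEquiv 2 ℂ (L × L)).trans
      (((LinearEquiv.prodComm ℂ L L).trans
        ((LinearEquiv.refl ℂ L).prodCongr (LinearEquiv.neg ℂ))).trans
        (WithLp.linearEquiv 2 ℂ (L × L)).symm)
  norm_map' x := by
    have h1 := WithLp.prod_norm_sq_eq_of_L2 x
    have h2 := WithLp.prod_norm_sq_eq_of_L2
      (((WithLp.linearEquiv 2 ℂ (L × L)).trans
      (((LinearEquiv.prodComm ℂ L L).trans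
        ((LinearEquiv.refl ℂ L).prodCongr (LinearEquiv.neg ℂ))).trans
        (WithLp.linearEquiv 2 ℂ (L × L)).symm)) x)
    have : ‖(((WithLp.linearEquiv 2 ℂ (L × L)).trans
      (((LinearEquiv.prodComm ℂ L L).trans
        ((LinearEquiv.refl ℂ L).prodCongr (LinearEquiv.neg ℂ))).trans
        (WithLp.linearEquiv 2 ℂ (L × L)).symm)) x)‖ ^ 2 = ‖x‖ ^ 2 := by
      rw [h1, h2]
      simp [WithLp.linearEquiv]
      ring
    have hx : (0:ℝ) ≤ ‖x‖ := norm_nonneg _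
    nlinarith [norm_nonneg (((WithLp.linearEquiv 2 ℂ (L × L)).trans
      (((LinearEquiv.prodComm ℂ L L).trans
        ((LinearEquiv.refl ℂ L).prodCongr (LinearEquiv.neg ℂ))).trans
        (WithLp.linearEquiv 2 ℂ (L × L)).symm)) x)]

lemma rotJ_apply (x : WithLp 2 (L × L)) :
    (WithLp.equiv 2 (L × L)) (rotJ x) =
      (((WithLp.equiv 2 (L × L)) x).2, -((WithLp.equiv 2 (L × L)) x).1) := by
  rfl

lemma blockOp_apply (X Y Z W : L →L[ℂ] L) (x : WithLp 2 (L × L)) :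
    (WithLp.equiv 2 (L × L)) (blockOp X Y Z W x) =
      (X ((WithLp.equiv 2 (L × L)) x).1 + Y ((WithLp.equiv 2 (L × L)) x).2,
       Z ((WithLp.equiv 2 (L × L)) x).1 + W ((WithLp.equiv 2 (L × L)) x).2) := by
  rfl

lemma key_conj (X Y D' : L →L[ℂ] L) :
    (blockOp X Y Y (-X) + blockOp D' 0 0 D') ∘L
        (rotJ : WithLp 2 (L × L) ≃ₗᵢ[ℂ] _).toLinearIsometry.toContinuousLinearMap =
      (rotJ : WithLp 2 (L × L) ≃ₗᵢ[ℂ] _).toLinearIsometry.toContinuousLinearMap ∘L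
        (blockOp D' 0 0 D' - blockOp X Y Y (-X)) := by
  ext v
  apply (WithLp.equiv 2 (L × L)).injective
  have hrot : ∀ y : WithLp 2 (L × L),
      (WithLp.equiv 2 (L × L))
        ((rotJ : WithLp 2 (L × L) ≃ₗᵢ[ℂ] _).toLinearIsometry.toContinuousLinearMap y)
      = (((WithLp.equiv 2 (L × L)) y).2, -((WithLp.equiv 2 (L × L)) y).1) := fun y => rfl
  simp only [coe_comp', Function.comp_apply, add_apply, sub_apply, hrot]
  have hadd : ∀ a b : WithLp 2 (L × L),
      (WithLp.equiv 2 (L × L)) (a + b)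
        = (WithLp.equiv 2 (L × L)) a + (WithLp.equiv 2 (L × L)) b := fun a b => rfl
  have hsub : ∀ a b : WithLp 2 (L × L),
      (WithLp.equiv 2 (L × L)) (a - b)
        = (WithLp.equiv 2 (L × L)) a - (WithLp.equiv 2 (L × L)) b := fun a b => rfl
  rw [hadd, hsub] <;> try skip
  simp only [blockOp_apply, hrot]
  ext <;> simp <;> abel

/-- minimality of horizontal liftings: if `X, Y` are commuting anti-Hermitian
operators on `L`, then the block operator `Z = [[X, Y], [Y, -X]]` on `L ⊕ L` satisfies
`‖Z‖ ≤ ‖Z + D‖` for every diagonal `D = [[D', 0], [0, D']]` with `D'` anti-Hermitian. -/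
theorem minimal_lifting (X Y D' : L →L[ℂ] L)
    (hX : star X = -X) (hY : star Y = -Y) (hXY : Commute X Y)
    (hD' : star D' = -D') :
    ‖blockOp X Y Y (-X)‖ ≤ ‖blockOp X Y Y (-X) + blockOp D' 0 0 D'‖ := by
  set A := blockOp X Y Y (-X) with hA
  set B := blockOp D' 0 0 D' with hB
  have hpt : ∀ v : WithLp 2 (L × L), (A + B) (rotJ v) = rotJ ((B - A) v) := by
    intro v
    have := ContinuousLinearMap.ext_iff.mp (key_conj X Y D') v
    exact this
  have hle : ‖B - A‖ ≤ ‖A + B‖ := by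
    refine opNorm_le_bound _ (norm_nonneg _) fun x => ?_
    have h1 : ‖(B - A) x‖ = ‖rotJ ((B - A) x)‖ := (rotJ.norm_map _).symm
    rw [h1, ← hpt x]
    calc ‖(A + B) (rotJ x)‖ ≤ ‖A + B‖ * ‖rotJ x‖ := le_opNorm _ _
      _ = ‖A + B‖ * ‖x‖ := by rw [rotJ.norm_map]
  have h2 : (2 : ℝ) • A = (A + B) - (B - A) := (two_smul ℝ A).trans (by abel)
  have h3 : ‖(2 : ℝ) • A‖ ≤ ‖A + B‖ + ‖B - A‖ := by
    rw [h2]; exact norm_sub_le _ _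
  have h4 : ‖(2 : ℝ) • A‖ = 2 * ‖A‖ := by
    rw [norm_smul (2 : ℝ) A]
    rw [Real.norm_ofNat]
  rw [h4] at h3
  linarith
end

section
/- Let P, Q be orthogonal projections in generic position on H. Then the operator K := Q - PQP - (1-P)Q(1-P) is selfadjoint and injective. -/
open ContinuousLinearMap

variable {H : Type*} [NormedAddCommGroup H] [InnerProductSpace ℂ H] [CompleteSpace H]

/-- For projections `P, Q` in generic position, the operator
`K = Q - PQP - (1-P)Q(1-P)` is selfadjoint and injective. -/
theorem K_selfadjoint_injective (P Q : H →L[ℂ] H)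
    (hP : IsOrthogonalProjection P) (hQ : IsOrthogonalProjection Q)
    (hgen : GenericPosition P Q) :
    IsSelfAdjoint (Q - P * Q * P - (1 - P) * Q * (1 - P)) ∧
    Function.Injective ⇑(Q - P * Q * P - (1 - P) * Q * (1 - P)) := by
  obtain ⟨hPsa, hPP⟩ := hP
  obtain ⟨hQsa, hQQ⟩ := hQ
  set K := Q - P * Q * P - (1 - P) * Q * (1 - P) with hK
  constructor
  · unfold IsSelfAdjoint
    simp only [hK, star_sub, star_mul, star_one, hPsa.star_eq, hQsa.star_eq]
    noncomm_ring
  · -- key: K = P*Q*(1-P) + (1-P)*Q*P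
    have hKeq : K = P * Q * (1 - P) + (1 - P) * Q * P := by
      rw [hK]; noncomm_ring
    have hPK : P * K = P * Q * (1 - P) := by
      rw [hKeq, mul_add]
      have e1 : P * (P * Q * (1 - P)) = P * Q * (1 - P) := by
        rw [show P * (P * Q * (1 - P)) = (P * P) * Q * (1 - P) by noncomm_ring, hPP]
      have e2 : P * ((1 - P) * Q * P) = 0 := by
        rw [show P * ((1 - P) * Q * P) = (P - P * P) * Q * P by noncomm_ring, hPP]
        simp
      rw [e1, e2, add_zero]
    have hQK : (1 - P) * K = (1 - P) * Q * P := by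
      rw [hKeq, mul_add]
      have e1 : (1 - P) * (P * Q * (1 - P)) = 0 := by
        rw [show (1 - P) * (P * Q * (1 - P)) = (P - P * P) * Q * (1 - P) by noncomm_ring,
          hPP]
        simp
      have e2 : (1 - P) * ((1 - P) * Q * P) = (1 - P) * Q * P := by
        rw [show (1 - P) * ((1 - P) * Q * P) = (1 - 2 • P + P * P) * Q * P by noncomm_ring,
          hPP]
        noncomm_ring
      rw [e1, e2, zero_add]
    suffices h : ∀ x, K x = 0 → x = 0 by
      intro a b hab
      have : K (a - b) = 0 := by rw [map_sub, hab, sub_self]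
      have := h _ this
      exact sub_eq_zero.mp this
    intro x hx
    -- part 1 : P*Q*(1-P) x = 0
    have h1 : (P * Q * (1 - P)) x = 0 := by
      have := congrArg (fun T : H →L[ℂ] H => T x) hPK
      simpa [mul_apply, hx] using this.symm
    have h2 : ((1 - P) * Q * P) x = 0 := by
      have := congrArg (fun T : H →L[ℂ] H => T x) hQK
      simpa [mul_apply, hx] using this.symm
    -- from h1: Q ((1-P) x) ∈ ker P ⊓ range Q = ⊥
    have hq1 : Q ((1 - P) x) = 0 := by
      have hmem : Q ((1 - P) x) ∈ LinearMap.ker (P : H →ₗ[ℂ] H) ⊓ LinearMap.range (Q : H →ₗ[ℂ] H) := by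
        refine ⟨?_, ⟨(1 - P) x, rfl⟩⟩
        have : P (Q ((1 - P) x)) = (P * Q * (1 - P)) x := by simp [mul_apply]
        simpa [LinearMap.mem_ker, this] using h1
      rw [hgen.2.2.1] at hmem
      simpa using hmem
    -- so (1-P) x ∈ ker P ⊓ ker Q = ⊥
    have hx1 : (1 - P) x = 0 := by
      have hmem : (1 - P) x ∈ LinearMap.ker (P : H →ₗ[ℂ] H) ⊓ LinearMap.ker (Q : H →ₗ[ℂ] H) := by
        constructor
        · have hPPx : P (P x) = P x := by
            have := congrArg (fun T : H →L[ℂ] H => T x) hPP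
            simpa [mul_apply] using this
          exact LinearMap.mem_ker.mpr (by simp [sub_apply, hPPx])
        · simpa [LinearMap.mem_ker] using hq1
      rw [hgen.2.2.2] at hmem
      simpa using hmem
    -- from h2: Q (P x) ∈ range P ⊓ range Q = ⊥
    have hq2 : Q (P x) = 0 := by
      have hmem : Q (P x) ∈ LinearMap.range (P : H →ₗ[ℂ] H) ⊓ LinearMap.range (Q : H →ₗ[ℂ] H) := by
        refine ⟨?_, ⟨P x, rfl⟩⟩
        have heq : Q (P x) - P (Q (P x)) = ((1 - P) * Q * P) x := by
          simp [mul_apply, sub_apply]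
        have : Q (P x) = P (Q (P x)) := by
          have h2' := h2
          rw [← heq] at h2'
          exact sub_eq_zero.mp h2'
        exact ⟨Q (P x), this.symm⟩
      rw [hgen.1] at hmem
      simpa using hmem
    have hx2 : P x = 0 := by
      have hmem : P x ∈ LinearMap.range (P : H →ₗ[ℂ] H) ⊓ LinearMap.ker (Q : H →ₗ[ℂ] H) := by
        exact ⟨⟨x, rfl⟩, by simpa [LinearMap.mem_ker] using hq2⟩
      rw [hgen.2.1] at hmem
      simpa using hmem
    have : x = P x + (1 - P) x := by simp [sub_apply]
    rw [this, hx1, hx2, add_zero]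
end
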